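/- Let q be a power of a prime and F_q the finite field with q elements. Let X ⊆ F_q with |X| ≥ 2. Suppose that 1 + R(X) ⊆ R(X) and X·R(X) ⊆ R(X), where 1 + R(X) = {1 + r : r ∈ R(X)} and X·R(X) = {x·r : x ∈ X, r ∈ R(X)}. Then R(X) = F_X, the subfield of F_q generated by X. -/

import Mathlib

open scoped Classical Pointwise

noncomputable section

namespace STP

variable {F : Type} [Field F]

def collinearTriples (A B : Finset F) : ℕ :=
  (((A ×ˢ A ×ˢ A) ×ˢ (B ×ˢ B ×ˢ B)).filter fun x =>
    (x.1.2.1 - x.1.1) * (x.2.2.2 - x.2.1) = (x.1.2.2 - x.1.1) * (x.2.2.1 - x.2.1)).card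

def IsLine (l : Set (F × F)) : Prop :=
  ∃ a b c : F, (a, b) ≠ (0, 0) ∧ l = {p : F × F | a * p.1 + b * p.2 = c}

def incidences (P : Finset (F × F)) (L : Finset (Set (F × F))) : ℕ :=
  ((P ×ˢ L).filter fun x => x.1 ∈ x.2).card

def kIncidences (P : Finset (F × F)) (L : Finset (Set (F × F))) (k : ℕ) : ℕ :=
  (((Fintype.piFinset fun _ : Fin k => P) ×ˢ L).filter fun x => ∀ i, x.1 i ∈ x.2).card

def numLines (P : Finset (F × F)) : ℕ :=
  Set.ncard {l : Set (F × F) | IsLine l ∧ 2 ≤ (P.filter (· ∈ l)).card}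

def addEnergy (X Y : Finset F) : ℕ :=
  (((X ×ˢ X) ×ˢ (Y ×ˢ Y)).filter fun t => t.1.1 + t.2.1 = t.1.2 + t.2.2).card

def mulEnergy (A : Finset F) : ℕ :=
  (((A ×ˢ A) ×ˢ (A ×ˢ A)).filter fun t => t.1.1 * t.2.1 = t.1.2 * t.2.2).card

def quotSet (X : Finset F) : Set F :=
  {r : F | ∃ x1 ∈ X, ∃ x2 ∈ X, ∃ x3 ∈ X, ∃ x4 ∈ X, x3 ≠ x4 ∧ r = (x1 - x2) / (x3 - x4)}

def subfieldCond (A : Finset F) (C bound : ℝ) : Prop :=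
  ∀ G : Subfield F, G ≠ ⊤ → ∀ c d : F,
    ((A.filter fun x => ∃ g ∈ G, x = c * g + d).card : ℝ) ≤
      C * max ((Nat.card G : ℝ) ^ ((1:ℝ)/2)) bound

def linesOf [Fintype F] (P : Finset (F × F)) : Finset (Set (F × F)) :=
  Set.Finite.toFinset (Set.toFinite {l : Set (F × F) | IsLine l ∧ 2 ≤ (P.filter (· ∈ l)).card})

def tripleCount [Fintype F] (P : Finset (F × F)) : ℕ :=
  ∑ l ∈ linesOf P, ((P.filter (· ∈ l)).card) ^ 3

-- helper: an injective self-map of a finite set is surjective on it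
lemma surj_of_mapsTo {R : Set F} (hR : R.Finite) (f : F → F) (hf : Function.Injective f)
    (h : ∀ r ∈ R, f r ∈ R) : ∀ r ∈ R, ∃ s ∈ R, f s = r := by
  have hb : Set.BijOn f R R :=
    (hR.injOn_iff_bijOn_of_mapsTo h).mp hf.injOn
  intro r hr
  obtain ⟨s, hs, hfs⟩ := hb.surjOn hr
  exact ⟨s, hs, hfs⟩

theorem stmt17 : ∀ (F : Type) [Field F] [Fintype F] (q : ℕ), IsPrimePow q → Fintype.card F = q →
    ∀ X : Finset F, 2 ≤ X.card →
    (∀ r ∈ quotSet X, 1 + r ∈ quotSet X) →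
    (∀ x ∈ X, ∀ r ∈ quotSet X, x * r ∈ quotSet X) →
    quotSet X = (Subfield.closure (X : Set F) : Set F) := by
  intro F _ _ q _ _ X hX h1 h2
  set R : Set F := quotSet X with hRdef
  have hRfin : R.Finite := Set.toFinite R
  -- two distinct elements of X
  obtain ⟨a, ha, b, hb, hab⟩ := Finset.one_lt_card.mp (by omega : 1 < X.card)
  have h0R : (0 : F) ∈ R := ⟨a, ha, a, ha, a, ha, b, hb, hab, by simp⟩
  -- the set of translations preserving R
  set T : Set F := {t : F | ∀ r ∈ R, t + r ∈ R} with hTdef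
  have h0T : (0 : F) ∈ T := fun r hr => by simpa using hr
  have h1T : (1 : F) ∈ T := h1
  have haddT : ∀ t ∈ T, ∀ u ∈ T, t + u ∈ T := by
    intro t ht u hu r hr
    have := ht (u + r) (hu r hr)
    rwa [← add_assoc] at this
  have hnegT : ∀ t ∈ T, -t ∈ T := by
    intro t ht r hr
    obtain ⟨s, hs, hfs⟩ := surj_of_mapsTo hRfin (fun y => t + y)
      (fun y z h => by simpa using h) ht r hr
    simpa [← hfs] using hs
  have hmulX : ∀ x ∈ X, ∀ t ∈ T, x * t ∈ T := by
    intro x hx t ht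
    rcases eq_or_ne x 0 with rfl | hx0
    · simpa using h0T
    · intro r hr
      obtain ⟨s, hs, hfs⟩ := surj_of_mapsTo hRfin (fun y => x * y)
        (fun y z h => by
          have : x * y = x * z := h
          exact mul_left_cancel₀ hx0 this) (fun y hy => h2 x hx y hy) r hr
      have : x * t + r = x * (t + s) := by rw [← hfs]; ring
      rw [this]
      exact h2 x hx _ (ht s hs)
  -- the multiplicatively robust part of T is a subring containing X
  set M : Set F := {t : F | t ∈ T ∧ ∀ u ∈ T, t * u ∈ T} with hMdef
  have hXM : ∀ x ∈ X, x ∈ M := by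
    intro x hx
    refine ⟨by simpa using hmulX x hx 1 h1T, fun u hu => hmulX x hx u hu⟩
  have hMring : ∀ c ∈ Subring.closure (X : Set F), c ∈ M := by
    intro c hc
    induction hc using Subring.closure_induction with
    | mem x hx => exact hXM x hx
    | zero => exact ⟨h0T, fun u hu => by simpa using h0T⟩
    | one => exact ⟨h1T, fun u hu => by simpa using hu⟩
    | add s t _ _ hs ht =>
        exact ⟨haddT s hs.1 t ht.1, fun u hu => by
          have := haddT _ (hs.2 u hu) _ (ht.2 u hu)
          rwa [← add_mul] at this⟩
    | neg s _ hs =>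
        exact ⟨hnegT s hs.1, fun u hu => by
          have := hnegT _ (hs.2 u hu)
          rwa [← neg_mul] at this⟩
    | mul s t _ _ hs ht =>
        exact ⟨hs.2 t ht.1, fun u hu => by
          have := hs.2 _ (ht.2 u hu)
          rwa [← mul_assoc] at this⟩
  -- the subring closure of X is a subfield
  have hinv : ∀ c ∈ Subring.closure (X : Set F), c⁻¹ ∈ Subring.closure (X : Set F) := by
    intro c hc
    rcases eq_or_ne c 0 with rfl | hc0
    · simpa using Subring.zero_mem _
    · obtain ⟨s, hs, hfs⟩ := surj_of_mapsTo (Set.toFinite _) (fun y => c * y)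
        (fun y z h => mul_left_cancel₀ hc0 h)
        (fun y hy => Subring.mul_mem _ hc hy) 1 (Subring.one_mem _)
      have : c⁻¹ = s := by field_simp at hfs ⊢; exact hfs.symm
      exact this ▸ hs
  set K : Subfield F :=
    { Subring.closure (X : Set F) with inv_mem' := hinv } with hKdef
  have hclosK : Subfield.closure (X : Set F) ≤ K :=
    Subfield.closure_le.mpr (fun x hx => Subring.subset_closure hx)
  -- closure of X ⊆ T ⊆ R
  have hTR : ∀ t ∈ T, t ∈ R := fun t ht => by simpa using ht 0 h0R
  -- R ⊆ closure
  ext r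
  constructor
  · rintro ⟨x1, h1', x2, h2', x3, h3', x4, h4', hne, rfl⟩
    have m : ∀ y ∈ X, y ∈ Subfield.closure (X : Set F) := fun y hy =>
      Subfield.subset_closure hy
    exact div_mem (sub_mem (m x1 h1') (m x2 h2')) (sub_mem (m x3 h3') (m x4 h4'))
  · intro hr
    have : r ∈ Subring.closure (X : Set F) := hclosK hr
    exact hTR r (hMring r this).1

end STP
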